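/- (Generalized Andreief identity) Let (X, Σ, μ) be a probability space, let N ≥ M ≥ 1, let f_1,…,f_M and g_1,…,g_N be functions in L²(μ), and let A be an (N−M)×N matrix over ℂ. Then det of the N×N matrix whose first N−M rows are A and whose last M rows have entries ∫_X f_j(t) g_k(t) dμ(t) (for 1 ≤ j ≤ M, 1 ≤ k ≤ N) equals (1/M!) ∫_{X^M} det(B(y)) · det(f_l(y_j))_{1≤l,j≤M} dμ(y_1)⋯dμ(y_M), where B(y) is the N×N matrix whose first N−M rows are A and whose last M rows have entries g_k(y_j). -/

import Mathlib

open MeasureTheory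

private lemma det_sum_col {n : Type*} [DecidableEq n] [Fintype n] (M : Matrix n n ℂ) :
    M.det = ∑ σ : Equiv.Perm n, ((Equiv.Perm.sign σ : ℤ) : ℂ) * ∏ i, M i (σ i) := by
  rw [← Matrix.det_transpose, Matrix.det_apply']
  rfl

private lemma det_block {N M : ℕ} (e : Fin (N - M) ⊕ Fin M ≃ Fin N)
    (A : Matrix (Fin (N - M)) (Fin N) ℂ) (v : Fin M → Fin N → ℂ) :
    (Matrix.of fun i k : Fin N =>
      Sum.elim (fun a => A a k) (fun b => v b k) (e.symm i)).det
    = ∑ σ : Equiv.Perm (Fin N), ((Equiv.Perm.sign σ : ℤ) : ℂ) *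
        (∏ a, A a (σ (e (Sum.inl a)))) * ∏ b, v b (σ (e (Sum.inr b))) := by
  rw [det_sum_col]
  refine Finset.sum_congr rfl fun σ _ => ?_
  rw [mul_assoc]
  congr 1
  rw [← Equiv.prod_comp e (fun i => (Matrix.of fun i k : Fin N =>
      Sum.elim (fun a => A a k) (fun b => v b k) (e.symm i)) i (σ i)),
    Fintype.prod_sum_type]
  simp

/-- The generalized Andreief identity. -/
theorem generalized_andreief
    {X : Type*} [MeasurableSpace X] (μ : Measure X) [IsProbabilityMeasure μ]
    (N M : ℕ) (hM : 1 ≤ M) (hMN : M ≤ N)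
    (f : Fin M → X → ℂ) (g : Fin N → X → ℂ)
    (hf : ∀ j, MemLp (f j) 2 μ) (hg : ∀ k, MemLp (g k) 2 μ)
    (A : Matrix (Fin (N - M)) (Fin N) ℂ)
    (e : Fin (N - M) ⊕ Fin M ≃ Fin N :=
      finSumFinEquiv.trans (finCongr (Nat.sub_add_cancel hMN))) :
    (Matrix.of fun i k : Fin N =>
        Sum.elim (fun a => A a k) (fun b => ∫ t, f b t * g k t ∂μ) (e.symm i)).det
      = (1 / (Nat.factorial M : ℂ)) *
        ∫ y : Fin M → X,
          (Matrix.of fun i k : Fin N =>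
            Sum.elim (fun a => A a k) (fun b => g k (y b)) (e.symm i)).det *
          (Matrix.of fun l j : Fin M => f l (y j)).det
        ∂(Measure.pi fun _ => μ) := by
  classical
  letI : MeasureSpace X := { toMeasurableSpace := ‹_›, volume := μ }
  haveI : SigmaFinite (volume : Measure X) := inferInstanceAs (SigmaFinite μ)
  set B : (Fin M → X) → Matrix (Fin N) (Fin N) ℂ := fun y =>
    Matrix.of fun i k : Fin N =>
      Sum.elim (fun a => A a k) (fun b => g k (y b)) (e.symm i) with hBdef
  have hBdet : ∀ y : Fin M → X, (B y).det
      = ∑ σ : Equiv.Perm (Fin N), ((Equiv.Perm.sign σ : ℤ) : ℂ) *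
          (∏ a, A a (σ (e (Sum.inl a)))) * ∏ b, g (σ (e (Sum.inr b))) (y b) :=
    fun y => det_block e A fun b k => g k (y b)
  -- integrability of products of two L² functions
  have hfg : ∀ (φ ψ : X → ℂ), MemLp φ 2 μ → MemLp ψ 2 μ →
      Integrable (fun t => φ t * ψ t) μ := by
    intro φ ψ hφ hψ
    have h : MemLp (φ • ψ) 1 μ := hψ.smul hφ
    rw [memLp_one_iff_integrable] at h
    exact h
  -- Step 1 : LHS as a single integral
  have hL : (Matrix.of fun i k : Fin N =>
        Sum.elim (fun a => A a k) (fun b => ∫ t, f b t * g k t ∂μ) (e.symm i)).det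
      = ∫ y : Fin M → X, (B y).det * ∏ b, f b (y b) ∂(Measure.pi fun _ => μ) := by
    rw [det_block e A fun b k => ∫ t, f b t * g k t ∂μ]
    calc
      ∑ σ : Equiv.Perm (Fin N), ((Equiv.Perm.sign σ : ℤ) : ℂ) *
          (∏ a, A a (σ (e (Sum.inl a)))) * ∏ b, ∫ t, f b t * g (σ (e (Sum.inr b))) t ∂μ
        = ∑ σ : Equiv.Perm (Fin N), ∫ y : Fin M → X,
            ((Equiv.Perm.sign σ : ℤ) : ℂ) * (∏ a, A a (σ (e (Sum.inl a)))) *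
              ∏ b, (f b (y b) * g (σ (e (Sum.inr b))) (y b)) ∂(Measure.pi fun _ => μ) := by
          refine Finset.sum_congr rfl fun σ _ => ?_
          have h1 : (∏ b, ∫ t, f b t * g (σ (e (Sum.inr b))) t ∂μ)
              = ∫ y : Fin M → X, ∏ b, (f b (y b) * g (σ (e (Sum.inr b))) (y b))
                  ∂(Measure.pi fun _ => μ) :=
            (MeasureTheory.integral_fintype_prod_eq_prod
              (fun b t => f b t * g (σ (e (Sum.inr b))) t)).symm
          rw [h1, ← integral_const_mul]
      _ = ∫ y : Fin M → X, ∑ σ : Equiv.Perm (Fin N),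
            ((Equiv.Perm.sign σ : ℤ) : ℂ) * (∏ a, A a (σ (e (Sum.inl a)))) *
              ∏ b, (f b (y b) * g (σ (e (Sum.inr b))) (y b)) ∂(Measure.pi fun _ => μ) := by
          rw [integral_finset_sum]
          intro σ _
          exact (Integrable.fintype_prod fun b => hfg _ _ (hf b) (hg _)).const_mul _
      _ = ∫ y : Fin M → X, (B y).det * ∏ b, f b (y b) ∂(Measure.pi fun _ => μ) := by
          refine integral_congr_ae (Filter.Eventually.of_forall fun y => ?_)
          beta_reduce
          rw [hBdet y, Finset.sum_mul]
          refine Finset.sum_congr rfl fun σ _ => ?_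
          rw [Finset.prod_mul_distrib]
          ring
  -- Step 2 : integrability of det (B y) times a product
  have hBint : ∀ h : Fin M → X → ℂ, (∀ b, MemLp (h b) 2 μ) →
      Integrable (fun y : Fin M → X => (B y).det * ∏ j, h j (y j))
        (Measure.pi fun _ => μ) := by
    intro h hh
    have hrw : (fun y : Fin M → X => (B y).det * ∏ j, h j (y j))
        = fun y => ∑ σ : Equiv.Perm (Fin N),
            (((Equiv.Perm.sign σ : ℤ) : ℂ) * ∏ a, A a (σ (e (Sum.inl a)))) *
              ∏ b, (h b (y b) * g (σ (e (Sum.inr b))) (y b)) := by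
      funext y
      rw [hBdet y, Finset.sum_mul]
      refine Finset.sum_congr rfl fun σ _ => ?_
      rw [Finset.prod_mul_distrib]
      ring
    rw [hrw]
    exact integrable_finset_sum _ fun σ _ =>
      (Integrable.fintype_prod fun b => hfg _ _ (hh b) (hg _)).const_mul _
  -- Step 3 : change of variables for each permutation τ
  have hperm : ∀ τ : Equiv.Perm (Fin M),
      (∫ y : Fin M → X, (B y).det * ∏ j, f (τ j) (y j) ∂(Measure.pi fun _ => μ))
        = ((Equiv.Perm.sign τ : ℤ) : ℂ) *
            ∫ y : Fin M → X, (B y).det * ∏ b, f b (y b) ∂(Measure.pi fun _ => μ) := by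
    intro τ
    have hmp : MeasurePreserving (MeasurableEquiv.piCongrLeft (fun _ : Fin M => X) τ.symm)
        (Measure.pi fun _ => μ) (Measure.pi fun _ => μ) :=
      MeasureTheory.measurePreserving_piCongrLeft (fun _ : Fin M => μ) τ.symm
    set T := MeasurableEquiv.piCongrLeft (fun _ : Fin M => X) τ.symm with hTdef
    have hT : ∀ (y : Fin M → X) (j : Fin M), T y j = y (τ j) := by
      intro y j
      have h0 := Equiv.piCongrLeft_apply_apply (fun _ : Fin M => X) τ.symm y (τ j)
      rw [Equiv.symm_apply_apply] at h0
      exact h0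
    have hcomp : (∫ y : Fin M → X, (B (T y)).det * ∏ j, f (τ j) (T y j)
          ∂(Measure.pi fun _ => μ))
        = ∫ y : Fin M → X, (B y).det * ∏ j, f (τ j) (y j) ∂(Measure.pi fun _ => μ) :=
      hmp.integral_comp' (fun y : Fin M → X => (B y).det * ∏ j, f (τ j) (y j))
    calc
      (∫ y : Fin M → X, (B y).det * ∏ j, f (τ j) (y j) ∂(Measure.pi fun _ => μ))
        = ∫ y : Fin M → X, (B (T y)).det * ∏ j, f (τ j) (T y j)
            ∂(Measure.pi fun _ => μ) := hcomp.symm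
      _ = ∫ y : Fin M → X, ((Equiv.Perm.sign τ : ℤ) : ℂ) * ((B y).det * ∏ b, f b (y b))
            ∂(Measure.pi fun _ => μ) := by
          refine integral_congr_ae (Filter.Eventually.of_forall fun y => ?_)
          beta_reduce
          have h2 : (∏ j, f (τ j) (T y j)) = ∏ b, f b (y b) := by
            simp_rw [hT y]
            exact Equiv.prod_comp τ fun b => f b (y b)
          have h3 : (B (T y)).det = ((Equiv.Perm.sign τ : ℤ) : ℂ) * (B y).det := by
            have hsub : B (T y) = (B y).submatrix
                (Equiv.permCongr e (Equiv.sumCongr (Equiv.refl (Fin (N - M))) τ)) id := by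
              ext i k
              simp only [hBdef, Matrix.submatrix_apply, Matrix.of_apply, id_eq,
                Equiv.permCongr_apply, Equiv.symm_apply_apply]
              rcases hsi : e.symm i with a | b
              · simp [hsi]
              · simp [hsi, hT y]
            rw [hsub, Matrix.det_permute]
            norm_cast
            rw [Equiv.Perm.sign_permCongr, Equiv.Perm.sign_sumCongr]
            simp
          rw [h2, h3]
          ring
      _ = ((Equiv.Perm.sign τ : ℤ) : ℂ) *
            ∫ y : Fin M → X, (B y).det * ∏ b, f b (y b) ∂(Measure.pi fun _ => μ) := by
          rw [integral_const_mul]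
  -- Step 4 : expand the RHS integral
  have hR : (∫ y : Fin M → X, (B y).det * (Matrix.of fun l j : Fin M => f l (y j)).det
        ∂(Measure.pi fun _ => μ))
      = (Nat.factorial M : ℂ) *
          ∫ y : Fin M → X, (B y).det * ∏ b, f b (y b) ∂(Measure.pi fun _ => μ) := by
    calc
      (∫ y : Fin M → X, (B y).det * (Matrix.of fun l j : Fin M => f l (y j)).det
          ∂(Measure.pi fun _ => μ))
        = ∫ y : Fin M → X, ∑ τ : Equiv.Perm (Fin M),
            ((Equiv.Perm.sign τ : ℤ) : ℂ) * ((B y).det * ∏ j, f (τ j) (y j))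
            ∂(Measure.pi fun _ => μ) := by
          refine integral_congr_ae (Filter.Eventually.of_forall fun y => ?_)
          beta_reduce
          rw [Matrix.det_apply' (Matrix.of fun l j : Fin M => f l (y j)), Finset.mul_sum]
          refine Finset.sum_congr rfl fun τ _ => ?_
          simp only [Matrix.of_apply]
          ring
      _ = ∑ τ : Equiv.Perm (Fin M), ((Equiv.Perm.sign τ : ℤ) : ℂ) *
            ∫ y : Fin M → X, (B y).det * ∏ j, f (τ j) (y j) ∂(Measure.pi fun _ => μ) := by
          rw [integral_finset_sum]
          · exact Finset.sum_congr rfl fun τ _ => integral_const_mul _ _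
          · intro τ _
            exact ((hBint _ fun b => hf (τ b)).const_mul _)
      _ = ∑ τ : Equiv.Perm (Fin M), ((Equiv.Perm.sign τ : ℤ) : ℂ) *
            (((Equiv.Perm.sign τ : ℤ) : ℂ) *
              ∫ y : Fin M → X, (B y).det * ∏ b, f b (y b) ∂(Measure.pi fun _ => μ)) := by
          refine Finset.sum_congr rfl fun τ _ => ?_
          rw [hperm τ]
      _ = (Nat.factorial M : ℂ) *
            ∫ y : Fin M → X, (B y).det * ∏ b, f b (y b) ∂(Measure.pi fun _ => μ) := by
          have hsq : ∀ τ : Equiv.Perm (Fin M),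
              ((Equiv.Perm.sign τ : ℤ) : ℂ) * (((Equiv.Perm.sign τ : ℤ) : ℂ) *
                ∫ y : Fin M → X, (B y).det * ∏ b, f b (y b) ∂(Measure.pi fun _ => μ))
              = ∫ y : Fin M → X, (B y).det * ∏ b, f b (y b) ∂(Measure.pi fun _ => μ) := by
            intro τ
            rw [← mul_assoc]
            norm_cast
            rw [Int.units_mul_self]
            simp
          simp_rw [hsq]
          rw [Finset.sum_const, Finset.card_univ, Fintype.card_perm, Fintype.card_fin,
            nsmul_eq_mul]
  have hR' : (∫ y : Fin M → X,
        (Matrix.of fun i k : Fin N =>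
          Sum.elim (fun a => A a k) (fun b => g k (y b)) (e.symm i)).det *
          (Matrix.of fun l j : Fin M => f l (y j)).det ∂(Measure.pi fun _ => μ))
      = (Nat.factorial M : ℂ) *
          ∫ y : Fin M → X, (B y).det * ∏ b, f b (y b) ∂(Measure.pi fun _ => μ) := hR
  rw [hL, hR', ← mul_assoc, one_div, inv_mul_cancel₀
    (Nat.cast_ne_zero.mpr (Nat.factorial_ne_zero M)), one_mul]
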